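/- Let G be a finite simple graph on vertex set V with distinguished depot 0, and x : E → {0,1} an edge selection. Suppose for every subset S ⊆ V with 0 ∈ S and every vertex i ∉ S that is 'visited' (z_i = 1), the number of selected edges in the cut δ(S) is at least 2. Then every visited vertex i lies in a connected component of the selected subgraph that contains the depot 0. -/

import Mathlib

open Finset in
/-- Cut-form subtour elimination implies connectivity to the depot:
if every cut separating a visited vertex `i` from the depot contains at
least two selected edges, then every visited vertex is connected to the
depot in the selected subgraph. -/
theorem stmt10 {V : Type*} [Fintype V] [DecidableEq V] (v0 : V)
    (x : V → V → ℕ) (z : V → ℕ)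
    (hxbin : ∀ a b, x a b ≤ 1) (hzbin : ∀ i, z i ≤ 1)
    (hsymm : ∀ a b, x a b = x b a)
    (hcut : ∀ S : Finset V, v0 ∈ S → ∀ i ∉ S,
      ∑ a ∈ S, ∑ b ∈ Sᶜ, x a b ≥ 2 * z i) :
    ∀ i, z i = 1 →
      Relation.ReflTransGen (fun a b => x a b = 1) i v0 := by
  classical
  intro i hzi
  set R : V → V → Prop := fun a b => x a b = 1 with hR
  by_contra hnot
  set S : Finset V := Finset.univ.filter (fun a => Relation.ReflTransGen R a v0) with hS
  have hv0 : v0 ∈ S := by simp [hS]; exact Relation.ReflTransGen.refl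
  have hiS : i ∉ S := by simp [hS]; exact hnot
  have hge := hcut S hv0 i hiS
  rw [hzi, mul_one] at hge
  have hpos : 0 < ∑ a ∈ S, ∑ b ∈ Sᶜ, x a b := lt_of_lt_of_le (by norm_num) hge
  obtain ⟨a, haS, ha⟩ := Finset.exists_ne_zero_of_sum_ne_zero hpos.ne'
  obtain ⟨b, hbS, hb⟩ := Finset.exists_ne_zero_of_sum_ne_zero ha
  have hx1 : x a b = 1 := le_antisymm (hxbin a b) (Nat.one_le_iff_ne_zero.mpr hb)
  have haR : Relation.ReflTransGen R a v0 := by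
    simp [hS] at haS; exact haS
  have hbR : Relation.ReflTransGen R b v0 :=
    Relation.ReflTransGen.head (by simp [hR, hsymm b a, hx1]) haR
  have : b ∈ S := by simp [hS]; exact hbR
  simp at hbS
  exact hbS this
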